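/- arXiv:2604.22377 — 5 statements merged into one kernel-verified Lean document; each statement's English description precedes it below -/
import Mathlib

section
/- The sum over nonnegative integers k of 1/((3k+1)(k+1)) equals (π√3)/12 + (3/4)·log 3. -/
open Real MeasureTheory Set
-- assume Fa, qpos, sqrt3_pos, hFderiv from a.lean; re-test combined later

noncomputable def Fa (x : ℝ) : ℝ :=
  (1/2) * Real.log (x^2+x+1) + (Real.sqrt 3/3) * Real.arctan ((2*x+1)/Real.sqrt 3)

lemma qpos (x : ℝ) : 0 < x^2 + x + 1 := by nlinarith [sq_nonneg (x + 1/2)]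

lemma sqrt3_pos : (0:ℝ) < Real.sqrt 3 := Real.sqrt_pos.2 (by norm_num)

lemma hFderiv (x : ℝ) : HasDerivAt Fa ((x+1)/(x^2+x+1)) x := by
  have hq : HasDerivAt (fun x : ℝ => x^2+x+1) (2*x+1) x := by
    have := ((hasDerivAt_pow 2 x).add (hasDerivAt_id x)).add_const 1
    simpa using this
  have hlog : HasDerivAt (fun x : ℝ => Real.log (x^2+x+1)) ((2*x+1)/(x^2+x+1)) x := by
    simpa [div_eq_mul_inv, mul_comm, Function.comp_def] using (Real.hasDerivAt_log (qpos x).ne').comp x hq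
  have hlin : HasDerivAt (fun x : ℝ => (2*x+1)/Real.sqrt 3) (2/Real.sqrt 3) x := by
    simpa using (((hasDerivAt_id x).const_mul 2).add_const 1).div_const (Real.sqrt 3)
  have harc : HasDerivAt (fun x : ℝ => Real.arctan ((2*x+1)/Real.sqrt 3))
      ((1/(1+((2*x+1)/Real.sqrt 3)^2)) * (2/Real.sqrt 3)) x :=
    (Real.hasDerivAt_arctan _).comp x hlin
  have := (hlog.const_mul (1/2:ℝ)).add (harc.const_mul (Real.sqrt 3/3))
  refine this.congr_deriv ?_
  have hs : Real.sqrt 3 ^ 2 = 3 := Real.sq_sqrt (by norm_num)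
  have hsne : Real.sqrt 3 ≠ 0 := sqrt3_pos.ne'
  rw [div_pow, hs]
  have h1 : 1 + (2*x+1)^2/3 = (4*x^2+4*x+4)/3 := by ring
  rw [h1]
  have h2 : (4*x^2+4*x+4 : ℝ) ≠ 0 := by nlinarith [qpos x]
  field_simp [(qpos x).ne']
  ring

lemma gcont : Continuous (fun x : ℝ => (x+1)/(x^2+x+1)) :=
  Continuous.div (by continuity) (by continuity) (fun x => (qpos x).ne')

lemma arctan_sqrt3 : Real.arctan (Real.sqrt 3) = π/3 := by
  rw [← Real.tan_pi_div_three, Real.arctan_tan] <;> nlinarith [pi_pos]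

lemma arctan_inv_sqrt3 : Real.arctan (1/Real.sqrt 3) = π/6 := by
  rw [← Real.tan_pi_div_six, Real.arctan_tan] <;> nlinarith [pi_pos]

lemma int_g : ∫ x in (0:ℝ)..1, (x+1)/(x^2+x+1) = (1/2) * Real.log 3 + π * Real.sqrt 3/18 := by
  rw [intervalIntegral.integral_eq_sub_of_hasDerivAt (fun x _ => hFderiv x)
    (gcont.intervalIntegrable 0 1)]
  have hsne : Real.sqrt 3 ≠ 0 := sqrt3_pos.ne'
  have h1 : (2*(1:ℝ)+1)/Real.sqrt 3 = Real.sqrt 3 := by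
    rw [div_eq_iff hsne]; nlinarith [Real.sq_sqrt (by norm_num : (3:ℝ) ≥ 0)]
  have h0 : (2*(0:ℝ)+1)/Real.sqrt 3 = 1/Real.sqrt 3 := by norm_num
  simp only [Fa]
  rw [h1, h0, arctan_sqrt3, arctan_inv_sqrt3]
  norm_num [Real.log_one]
  ring

lemma int_k (k : ℕ) : ∫ x in Ioo (0:ℝ) 1, (x^(3*k) - x^(3*k+2)) =
    1/(3*(k:ℝ)+1) - 1/(3*(k:ℝ)+3) := by
  rw [← MeasureTheory.integral_Ioc_eq_integral_Ioo,
    ← intervalIntegral.integral_of_le (by norm_num : (0:ℝ) ≤ 1)]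
  rw [intervalIntegral.integral_sub (intervalIntegral.intervalIntegrable_pow _)
    (intervalIntegral.intervalIntegrable_pow _)]
  rw [integral_pow, integral_pow]
  push_cast
  ring

lemma summable_a : Summable (fun k : ℕ => (1:ℝ)/((3*(k:ℝ)+1)*((k:ℝ)+1))) := by
  have h : Summable (fun k : ℕ => (1:ℝ)/((k:ℝ)+1)^2) := by
    have := (summable_nat_add_iff (f := fun n : ℕ => (1:ℝ)/(n:ℝ)^2) 1).2
      (Real.summable_one_div_nat_pow.2 one_lt_two)
    simpa using this
  refine Summable.of_nonneg_of_le (fun k => by positivity) (fun k => ?_) h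
  have hk : (0:ℝ) ≤ k := Nat.cast_nonneg k
  rw [div_le_div_iff₀ (by positivity) (by positivity)]
  nlinarith

lemma ptsum {x : ℝ} (hx : x ∈ Ioo (0:ℝ) 1) :
    HasSum (fun k : ℕ => x^(3*k) - x^(3*k+2)) ((x+1)/(x^2+x+1)) := by
  obtain ⟨h0, h1⟩ := hx
  have hx3 : x^3 < 1 := by nlinarith [pow_lt_one₀ h0.le h1 (by norm_num : 3 ≠ 0)]
  have hx3' : (0:ℝ) ≤ x^3 := by positivity
  have hg : HasSum (fun k : ℕ => (1 - x^2) * (x^3)^k) ((1-x^2) * (1-x^3)⁻¹) :=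
    (hasSum_geometric_of_lt_one hx3' hx3).mul_left _
  have he : (fun k : ℕ => (1 - x^2) * (x^3)^k) = fun k : ℕ => x^(3*k) - x^(3*k+2) := by
    funext k
    rw [← pow_mul, pow_add]
    ring
  rw [he] at hg
  convert hg using 1
  have h3 : (1:ℝ) - x^3 ≠ 0 := by nlinarith
  field_simp
  ring

theorem sum_inv_3k1_k1 :
    ∑' k : ℕ, (1 : ℝ) / ((3 * (k : ℝ) + 1) * ((k : ℝ) + 1)) =
      Real.pi * Real.sqrt 3 / 12 + (3 / 4) * Real.log 3 := by
  set F : ℕ → ℝ → ℝ := fun k x => x^(3*k) - x^(3*k+2) with hF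
  have hInt : ∀ k, IntegrableOn (F k) (Ioo (0:ℝ) 1) volume := fun k =>
    (((continuous_pow (3*k)).sub (continuous_pow (3*k+2))).integrableOn_Icc).mono_set
      Ioo_subset_Icc_self
  have hnorm : ∀ k, (∫ x in Ioo (0:ℝ) 1, ‖F k x‖) = 1/(3*(k:ℝ)+1) - 1/(3*(k:ℝ)+3) := by
    intro k
    rw [← int_k k]
    refine setIntegral_congr_fun measurableSet_Ioo (fun x hx => ?_)
    obtain ⟨h0, h1⟩ := hx
    have : x^(3*k+2) ≤ x^(3*k) :=
      pow_le_pow_of_le_one h0.le h1.le (by omega)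
    simp [hF, Real.norm_of_nonneg (sub_nonneg.2 this)]
  have key : ∀ k : ℕ, 1/(3*(k:ℝ)+1) - 1/(3*(k:ℝ)+3) =
      (2/3) * ((1:ℝ)/((3*(k:ℝ)+1)*((k:ℝ)+1))) := by
    intro k
    have hk : (0:ℝ) ≤ k := Nat.cast_nonneg k
    field_simp
    ring
  have hSum : Summable fun k => ∫ x in Ioo (0:ℝ) 1, ‖F k x‖ := by
    simp only [hnorm, key]
    exact summable_a.mul_left _
  have swap := MeasureTheory.integral_tsum_of_summable_integral_norm hInt hSum
  have hts : (∫ x in Ioo (0:ℝ) 1, ∑' k, F k x) = ∫ x in Ioo (0:ℝ) 1, (x+1)/(x^2+x+1) :=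
    setIntegral_congr_fun measurableSet_Ioo (fun x hx => (ptsum hx).tsum_eq)
  have hgval : (∫ x in Ioo (0:ℝ) 1, (x+1)/(x^2+x+1)) =
      (1/2) * Real.log 3 + π * Real.sqrt 3/18 := by
    rw [← MeasureTheory.integral_Ioc_eq_integral_Ioo,
      ← intervalIntegral.integral_of_le (by norm_num : (0:ℝ) ≤ 1), int_g]
  calc ∑' k : ℕ, (1 : ℝ) / ((3 * (k : ℝ) + 1) * ((k : ℝ) + 1))
      = ∑' k : ℕ, (3/2) * ∫ x in Ioo (0:ℝ) 1, F k x := by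
        congr 1; funext k
        rw [int_k k, key k]; ring
    _ = (3/2) * ∑' k : ℕ, ∫ x in Ioo (0:ℝ) 1, F k x := tsum_mul_left
    _ = (3/2) * ((1/2) * Real.log 3 + π * Real.sqrt 3/18) := by
        rw [swap, hts, hgval]
    _ = Real.pi * Real.sqrt 3 / 12 + (3 / 4) * Real.log 3 := by ring
end

section
/- The sum over nonnegative integers k of 1/((3k+2)(3k+4)) equals 1/2 − (√3·π)/18. -/
open Real MeasureTheory intervalIntegral

lemma hderiv (x : ℝ) : HasDerivAt (fun x : ℝ => 2/Real.sqrt 3 * Real.arctan ((2*x+1)/Real.sqrt 3))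
    (1/(x^2+x+1)) x := by
  have h3 : Real.sqrt 3 > 0 := by positivity
  have hs : Real.sqrt 3 ^ 2 = 3 := Real.sq_sqrt (by norm_num)
  have hq : x^2+x+1 > 0 := by nlinarith [sq_nonneg (x+1)]
  have h1 : HasDerivAt (fun x : ℝ => (2*x+1)/Real.sqrt 3) (2/Real.sqrt 3) x := by
    simpa using ((hasDerivAt_id x).const_mul 2 |>.add_const 1).div_const (Real.sqrt 3)
  have h2 := (Real.hasDerivAt_arctan ((2*x+1)/Real.sqrt 3)).comp x h1
  have h4 := h2.const_mul (2/Real.sqrt 3)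
  have key : 1 + ((2*x+1)/Real.sqrt 3)^2 = (4/3)*(x^2+x+1) := by
    rw [div_pow, hs]; ring
  refine h4.congr_deriv ?_
  rw [key]
  field_simp
  rw [hs]; ring

lemma int_inv : ∫ x in (0:ℝ)..1, 1/(x^2+x+1) = Real.sqrt 3 * π / 9 := by
  have hs : Real.sqrt 3 ^ 2 = 3 := Real.sq_sqrt (by norm_num)
  have h3 : Real.sqrt 3 > 0 := by positivity
  rw [intervalIntegral.integral_eq_sub_of_hasDerivAt (fun x _ => hderiv x)]
  · have a1 : Real.arctan ((2*(1:ℝ)+1)/Real.sqrt 3) = π/3 := by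
      rw [show ((2*(1:ℝ)+1)/Real.sqrt 3) = Real.sqrt 3 by
        rw [eq_comm, eq_div_iff h3.ne']; nlinarith]
      rw [← Real.tan_pi_div_three, Real.arctan_tan] <;> nlinarith [pi_pos]
    have a0 : Real.arctan ((2*(0:ℝ)+1)/Real.sqrt 3) = π/6 := by
      norm_num
    rw [a1, a0]
    field_simp
    linear_combination (-18) * hs
  · apply ContinuousOn.intervalIntegrable
    apply ContinuousOn.div continuousOn_const (by fun_prop)
    intro x _; nlinarith [sq_nonneg (x+1)]

noncomputable def g (k : ℕ) (x : ℝ) : ℝ := x^(3*k+1) - x^(3*k+3)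

lemma contg (k : ℕ) : Continuous (g k) := by unfold g; fun_prop

lemma intg (k : ℕ) : ∫ x in (0:ℝ)..1, g k x = 1/(3*(k:ℝ)+2) - 1/(3*(k:ℝ)+4) := by
  unfold g
  rw [intervalIntegral.integral_sub (intervalIntegral.intervalIntegrable_pow _)
      (intervalIntegral.intervalIntegrable_pow _), integral_pow, integral_pow]
  push_cast
  norm_num
  ring

lemma summ : Summable (fun k : ℕ => 1/(3*(k:ℝ)+2) - 1/(3*(k:ℝ)+4)) := by
  apply Summable.of_nonneg_of_le (fun k => ?_) (fun k => ?_)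
    (((summable_nat_add_iff 1).2 (Real.summable_one_div_nat_pow.2 one_lt_two)).mul_left 2)
  · have h2 : (0:ℝ) < 3*(k:ℝ)+2 := by positivity
    have h4 : (0:ℝ) < 3*(k:ℝ)+4 := by positivity
    rw [sub_nonneg, div_le_div_iff₀ h4 h2]; linarith
  · have h2 : (0:ℝ) < 3*(k:ℝ)+2 := by positivity
    have h4 : (0:ℝ) < 3*(k:ℝ)+4 := by positivity
    have : 1/(3*(k:ℝ)+2) - 1/(3*(k:ℝ)+4) = 2/((3*(k:ℝ)+2)*(3*(k:ℝ)+4)) := by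
      field_simp; ring
    rw [this]
    have hk : (0:ℝ) < ((k:ℝ)+1)^2 := by positivity
    have hle : ((k:ℝ)+1)^2 ≤ (3*(k:ℝ)+2)*(3*(k:ℝ)+4) := by nlinarith [Nat.cast_nonneg (α := ℝ) k]
    calc 2/((3*(k:ℝ)+2)*(3*(k:ℝ)+4)) ≤ 2/((k:ℝ)+1)^2 := by
          apply div_le_div_of_nonneg_left (by norm_num) hk hle
      _ = 2 * (1/((k:ℝ)+1)^2) := by ring
      _ ≤ 2 * (1/((k+1 : ℕ):ℝ)^2) := by push_cast; exact le_rfl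

lemma tsum_g {x : ℝ} (hx : x ∈ Set.Ioo (0:ℝ) 1) : ∑' k, g k x = 1 - 1/(x^2+x+1) := by
  obtain ⟨h0, h1⟩ := hx
  have hx3 : x^3 < 1 := by nlinarith [sq_nonneg x, mul_pos h0 h0]
  have hx3' : (0:ℝ) ≤ x^3 := by positivity
  have hq : x^2+x+1 > 0 := by positivity
  have hne : 1 - x^3 ≠ 0 := by nlinarith
  have heq : ∀ k, g k x = (x^3)^k * (x - x^3) := by
    intro k; unfold g; rw [pow_add, pow_add, pow_mul]; ring
  calc ∑' k, g k x = ∑' k : ℕ, (x^3)^k * (x-x^3) := tsum_congr heq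
    _ = (∑' k : ℕ, (x^3)^k) * (x-x^3) := tsum_mul_right
    _ = (1-x^3)⁻¹ * (x-x^3) := by rw [tsum_geometric_of_lt_one hx3' hx3]
    _ = 1 - 1/(x^2+x+1) := by field_simp; ring

lemma sum_a : ∑' k : ℕ, (1/(3*(k:ℝ)+2) - 1/(3*(k:ℝ)+4)) = 1 - Real.sqrt 3 * π / 9 := by
  have hnn : ∀ k : ℕ, ∀ x ∈ Set.Ioo (0:ℝ) 1, 0 ≤ g k x := by
    rintro k x ⟨h0, h1⟩
    unfold g
    have := pow_le_pow_of_le_one h0.le h1.le (show 3*k+1 ≤ 3*k+3 by omega)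
    linarith
  have hintg : ∀ k : ℕ, IntegrableOn (g k) (Set.Ioo (0:ℝ) 1) volume :=
    fun k => ((contg k).integrableOn_Icc (a := 0) (b := 1)).mono_set Set.Ioo_subset_Icc_self
  have hint : ∀ k : ℕ, ∫ x in Set.Ioo (0:ℝ) 1, g k x = 1/(3*(k:ℝ)+2) - 1/(3*(k:ℝ)+4) := by
    intro k
    rw [← MeasureTheory.integral_Ioc_eq_integral_Ioo,
        ← intervalIntegral.integral_of_le zero_le_one, intg]
  have hann : ∀ k : ℕ, (0:ℝ) ≤ 1/(3*(k:ℝ)+2) - 1/(3*(k:ℝ)+4) := by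
    intro k
    have h2 : (0:ℝ) < 3*(k:ℝ)+2 := by positivity
    have h4 : (0:ℝ) < 3*(k:ℝ)+4 := by positivity
    rw [sub_nonneg, div_le_div_iff₀ h4 h2]; linarith
  have hlint : ∀ k : ℕ, ∫⁻ x in Set.Ioo (0:ℝ) 1, (‖g k x‖₊ : ENNReal)
      = ENNReal.ofReal (1/(3*(k:ℝ)+2) - 1/(3*(k:ℝ)+4)) := by
    intro k
    rw [← hint k, MeasureTheory.ofReal_integral_eq_lintegral_ofReal (hintg k)
      ((ae_restrict_iff' measurableSet_Ioo).2 (Filter.Eventually.of_forall (hnn k)))]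
    apply lintegral_congr_ae
    filter_upwards [ae_restrict_mem measurableSet_Ioo] with x hx
    exact Real.enorm_eq_ofReal (hnn k x hx)
  have hswap := MeasureTheory.integral_tsum
    (μ := volume.restrict (Set.Ioo (0:ℝ) 1)) (f := g)
    (fun k => (contg k).aestronglyMeasurable)
    (by
      simp only [enorm_eq_nnnorm, hlint]
      rw [← ENNReal.ofReal_tsum_of_nonneg hann summ]
      exact ENNReal.ofReal_ne_top)
  calc ∑' k : ℕ, (1/(3*(k:ℝ)+2) - 1/(3*(k:ℝ)+4))
      = ∑' k : ℕ, ∫ x in Set.Ioo (0:ℝ) 1, g k x := by rw [funext hint]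
    _ = ∫ x in Set.Ioo (0:ℝ) 1, ∑' k, g k x := hswap.symm
    _ = ∫ x in Set.Ioo (0:ℝ) 1, (1 - 1/(x^2+x+1)) :=
        setIntegral_congr_fun measurableSet_Ioo (fun x hx => tsum_g hx)
    _ = ∫ x in (0:ℝ)..1, (1 - 1/(x^2+x+1)) := by
        rw [intervalIntegral.integral_of_le zero_le_one,
          MeasureTheory.integral_Ioc_eq_integral_Ioo]
    _ = 1 - Real.sqrt 3 * π / 9 := by
        have hc : IntervalIntegrable (fun x : ℝ => 1/(x^2+x+1)) volume 0 1 := by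
          apply ContinuousOn.intervalIntegrable
          apply ContinuousOn.div continuousOn_const (by fun_prop)
          intro x _; nlinarith [sq_nonneg (x+1)]
        rw [intervalIntegral.integral_sub intervalIntegrable_const hc, int_inv]
        simp

theorem sum_inv_3k2_3k4 :
    ∑' k : ℕ, (1 : ℝ) / ((3 * (k : ℝ) + 2) * (3 * (k : ℝ) + 4)) =
      1 / 2 - Real.sqrt 3 * Real.pi / 18 := by
  have key : ∀ k : ℕ, (1:ℝ)/((3*(k:ℝ)+2)*(3*(k:ℝ)+4))
      = (1/2) * (1/(3*(k:ℝ)+2) - 1/(3*(k:ℝ)+4)) := by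
    intro k
    have h2 : (0:ℝ) < 3*(k:ℝ)+2 := by positivity
    have h4 : (0:ℝ) < 3*(k:ℝ)+4 := by positivity
    field_simp
    ring
  rw [tsum_congr key, tsum_mul_left, sum_a]
  ring
end

section
/- For every positive integer n, (−1)^n · n!^10 · (205n² + 250n + 77) / (64 · ((2n+1)!)^5) summed over all n ≥ 0 equals ζ(3), i.e., ∑_{n=0}^∞ (−1)^n (205n²+250n+77) (n!)^{10} / (64 ((2n+1)!)^5) = ζ(3). -/
open Filter Topology Finset

namespace AZzeta3

noncomputable def B (n k : ℕ) : ℝ :=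
  (n.factorial : ℝ) ^ 6 * (k.factorial : ℝ) ^ 4 /
    (((n + k + 1).factorial : ℝ) ^ 4 * ((2 * n + 1).factorial : ℝ))

noncomputable def F (n k : ℕ) : ℝ :=
  (-1 : ℝ) ^ n * ((2 * (n : ℝ) ^ 2 + 4 * n * k + 5 * n + 2 * k + 2) / 2) * B n k

noncomputable def G (n k : ℕ) : ℝ :=
  (-1 : ℝ) ^ n *
    ((5 * (n : ℝ) ^ 2 + 6 * n * k + 2 * (k : ℝ) ^ 2 + 10 * n + 6 * k + 5) / 4) * B n k

lemma fact_cast_pos (m : ℕ) : (0 : ℝ) < (m.factorial : ℝ) :=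
  Nat.cast_pos.mpr m.factorial_pos

lemma B_pos (n k : ℕ) : 0 < B n k := by
  unfold B
  apply div_pos
  · exact mul_pos (pow_pos (fact_cast_pos n) 6) (pow_pos (fact_cast_pos k) 4)
  · exact mul_pos (pow_pos (fact_cast_pos _) 4) (fact_cast_pos _)

lemma B_left (n k : ℕ) :
    B (n + 1) k =
      ((n : ℝ) + 1) ^ 6 / ((((n : ℝ) + k + 2) ^ 4) * ((2 * n + 3) * (2 * n + 2))) * B n k := by
  unfold B
  have h1 : (n + 1) + k + 1 = (n + k + 1) + 1 := by omega
  have h2 : 2 * (n + 1) + 1 = (2 * n + 1) + 1 + 1 := by omega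
  rw [h1, h2]
  simp only [Nat.factorial_succ]
  have hg1 : ((n + k).factorial : ℝ) ≠ 0 := (fact_cast_pos _).ne'
  have hg2 : (((2 * n).factorial : ℝ)) ≠ 0 := (fact_cast_pos _).ne'
  have hg3 : ((n.factorial : ℝ)) ≠ 0 := (fact_cast_pos _).ne'
  have hg4 : ((k.factorial : ℝ)) ≠ 0 := (fact_cast_pos _).ne'
  have hf3 : ((n : ℝ) + k + 2) ≠ 0 := by positivity
  have hf3' : ((n : ℝ) + k + 1) ≠ 0 := by positivity
  have hf4 : ((2 : ℝ) * n + 3) ≠ 0 := by positivity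
  have hf5 : ((2 : ℝ) * n + 2) ≠ 0 := by positivity
  have hf5' : ((2 : ℝ) * n + 1) ≠ 0 := by positivity
  have hf6 : ((n : ℝ) + 1) ≠ 0 := by positivity
  push_cast
  field_simp
  ring

lemma B_right (n k : ℕ) :
    B n (k + 1) = ((k : ℝ) + 1) ^ 4 / (((n : ℝ) + k + 2) ^ 4) * B n k := by
  unfold B
  have h1 : n + (k + 1) + 1 = (n + k + 1) + 1 := by omega
  rw [h1]
  simp only [Nat.factorial_succ]
  have hg1 : ((n + k).factorial : ℝ) ≠ 0 := (fact_cast_pos _).ne'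
  have hg2 : (((2 * n).factorial : ℝ)) ≠ 0 := (fact_cast_pos _).ne'
  have hg4 : ((k.factorial : ℝ)) ≠ 0 := (fact_cast_pos _).ne'
  have hf3 : ((n : ℝ) + k + 2) ≠ 0 := by positivity
  have hf3' : ((n : ℝ) + k + 1) ≠ 0 := by positivity
  have hf5' : ((2 : ℝ) * n + 1) ≠ 0 := by positivity
  have hf6 : ((k : ℝ) + 1) ≠ 0 := by positivity
  push_cast
  field_simp
  ring

lemma pair (n k : ℕ) : F (n + 1) k - F n k = G n (k + 1) - G n k := by
  unfold F G
  rw [B_left, B_right, pow_succ]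
  have hb := (B_pos n k).ne'
  have hf3 : ((n : ℝ) + k + 2) ≠ 0 := by positivity
  have hf4 : ((2 : ℝ) * n + 3) ≠ 0 := by positivity
  have hf5 : ((2 : ℝ) * n + 2) ≠ 0 := by positivity
  push_cast
  field_simp
  ring

lemma boundary (k : ℕ) : F 0 k = 1 / ((k : ℝ) + 1) ^ 3 := by
  unfold F B
  have h1 : 0 + k + 1 = k + 1 := by omega
  rw [h1, Nat.factorial_succ]
  have hf0 : ((k.factorial : ℝ)) ≠ 0 := (fact_cast_pos _).ne'
  have hf6 : ((k : ℝ) + 1) ≠ 0 := by positivity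
  norm_num [Nat.factorial]
  push_cast
  field_simp

lemma diag (k : ℕ) :
    F (k + 1) k + G k k =
      (-1 : ℝ) ^ k * (205 * (k : ℝ) ^ 2 + 250 * (k : ℝ) + 77) *
        ((k.factorial : ℝ)) ^ 10 / (64 * ((2 * k + 1).factorial : ℝ) ^ 5) := by
  unfold F G B
  have h1 : (k + 1) + k + 1 = (2 * k + 1) + 1 := by omega
  have h2 : 2 * (k + 1) + 1 = (2 * k + 1) + 1 + 1 := by omega
  have h3 : k + k + 1 = 2 * k + 1 := by omega
  rw [h1, h2, h3, pow_succ]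
  simp only [Nat.factorial_succ]
  have hg2 : (((2 * k).factorial : ℝ)) ≠ 0 := (fact_cast_pos _).ne'
  have hf0 : ((k.factorial : ℝ)) ≠ 0 := (fact_cast_pos _).ne'
  have hf6 : ((k : ℝ) + 1) ≠ 0 := by positivity
  have hf5' : ((2 : ℝ) * k + 1) ≠ 0 := by positivity
  have hf7 : ((2 : ℝ) * k + 2) ≠ 0 := by positivity
  have hf8 : ((2 : ℝ) * k + 3) ≠ 0 := by positivity
  push_cast
  field_simp
  ring

noncomputable def t (n : ℕ) : ℝ :=
  (-1 : ℝ) ^ n * (205 * (n : ℝ) ^ 2 + 250 * (n : ℝ) + 77) *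
    ((n.factorial : ℝ)) ^ 10 / (64 * ((2 * n + 1).factorial : ℝ) ^ 5)

noncomputable def z (k : ℕ) : ℝ := 1 / ((k : ℝ) + 1) ^ 3

noncomputable def E (K : ℕ) : ℝ := ∑ n ∈ Finset.range (K + 1), G n (K + 1)

lemma diag' (k : ℕ) : F (k + 1) k + G k k = t k := diag k

lemma colsum (M k : ℕ) :
    ∑ n ∈ Finset.range (M + 1), (G n (k + 1) - G n k) = F (M + 1) k - F 0 k := by
  have h : ∀ n, G n (k + 1) - G n k = F (n + 1) k - F n k := fun n => (pair n k).symm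
  simp_rw [h]
  exact Finset.sum_range_sub (fun n => F n k) (M + 1)

lemma key (K : ℕ) :
    ∑ k ∈ Finset.range (K + 1), z k = ∑ k ∈ Finset.range (K + 1), t k - E K := by
  induction K with
  | zero =>
      have h1 := diag' 0
      have h2 := pair 0 0
      have h3 := boundary 0
      unfold E z
      rw [Finset.sum_range_one, Finset.sum_range_one, Finset.sum_range_one]
      norm_num at h1 h2 h3 ⊢
      linarith [h1, h2, h3]
  | succ K ih =>
      have hcol := colsum (K + 1) (K + 1)
      rw [Finset.sum_sub_distrib] at hcol
      have hd := diag' (K + 1)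
      have hb := boundary (K + 1)
      have hz : z (K + 1) = F 0 (K + 1) := (boundary (K + 1)).symm
      have hE1 : E (K + 1) = ∑ n ∈ Finset.range (K + 1 + 1), G n (K + 1 + 1) := rfl
      have hsplit : ∑ n ∈ Finset.range (K + 1 + 1), G n (K + 1)
          = E K + G (K + 1) (K + 1) := by
        rw [Finset.sum_range_succ]; rfl
      rw [Finset.sum_range_succ z (K + 1), Finset.sum_range_succ t (K + 1), ih, hE1]
      linear_combination hcol + hd + hz + hsplit

lemma nat_ineq1 (n : ℕ) : n.factorial * n.factorial ≤ (2 * n + 1).factorial := by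
  have hd := Nat.factorial_mul_factorial_dvd_factorial_add n (n + 1)
  have he : n + (n + 1) = 2 * n + 1 := by omega
  rw [he] at hd
  calc n.factorial * n.factorial ≤ n.factorial * (n + 1).factorial := by
        exact Nat.mul_le_mul_left _ (Nat.factorial_le (by omega))
    _ ≤ (2 * n + 1).factorial := Nat.le_of_dvd (Nat.factorial_pos _) hd

lemma nat_ineq1' (n : ℕ) : (n + 1) * (n.factorial * n.factorial) ≤ (2 * n + 1).factorial := by
  have hd := Nat.factorial_mul_factorial_dvd_factorial_add n (n + 1)
  have he : n + (n + 1) = 2 * n + 1 := by omega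
  rw [he] at hd
  have : n.factorial * (n + 1).factorial = (n + 1) * (n.factorial * n.factorial) := by
    rw [Nat.factorial_succ]; ring
  rw [this] at hd
  exact Nat.le_of_dvd (Nat.factorial_pos _) hd

lemma nat_ineq2 (n K : ℕ) : (K + 2).factorial * n.factorial ≤ (n + K + 2).factorial := by
  have hd := Nat.factorial_mul_factorial_dvd_factorial_add (K + 2) n
  have he : K + 2 + n = n + K + 2 := by omega
  rw [he] at hd
  exact Nat.le_of_dvd (Nat.factorial_pos _) hd

lemma B_le (n K : ℕ) : B n (K + 1) ≤ 1 / ((K : ℝ) + 2) ^ 4 := by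
  have hnat : ((K + 2).factorial * n.factorial) ^ 4 * (n.factorial * n.factorial)
      ≤ ((n + K + 2).factorial) ^ 4 * (2 * n + 1).factorial :=
    Nat.mul_le_mul (Nat.pow_le_pow_left (nat_ineq2 n K) 4) (nat_ineq1 n)
  have hcast : (((K + 2).factorial : ℝ) * n.factorial) ^ 4 * (n.factorial * n.factorial)
      ≤ (((n + K + 2).factorial : ℝ)) ^ 4 * ((2 * n + 1).factorial : ℝ) := by
    exact_mod_cast hnat
  unfold B
  have hidx : n + (K + 1) + 1 = n + K + 2 := by omega
  rw [hidx]
  rw [div_le_div_iff₀ (by positivity) (by positivity)]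
  have hfs : ((K + 2).factorial : ℝ) = ((K : ℝ) + 2) * ((K + 1).factorial : ℝ) := by
    have : (K + 2).factorial = (K + 2) * (K + 1).factorial := Nat.factorial_succ (K + 1)
    rw [this]; push_cast; ring
  rw [hfs] at hcast
  nlinarith [hcast]

lemma G_abs (n k : ℕ) :
    |G n k| = (5 * (n : ℝ) ^ 2 + 6 * n * k + 2 * (k : ℝ) ^ 2 + 10 * n + 6 * k + 5) / 4
      * B n k := by
  unfold G
  rw [abs_mul, abs_mul, abs_pow, abs_neg, abs_one, one_pow, one_mul,
    abs_of_nonneg (by positivity : (0:ℝ) ≤ (5 * (n : ℝ) ^ 2 + 6 * n * k + 2 * (k : ℝ) ^ 2 + 10 * n + 6 * k + 5) / 4),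
    abs_of_pos (B_pos n k)]

lemma G_bound (n K : ℕ) (hn : n ≤ K) :
    |G n (K + 1)| ≤ (17 / 2) / ((K : ℝ) + 2) ^ 2 := by
  rw [G_abs]
  have hnK : (n : ℝ) ≤ (K : ℝ) := Nat.cast_le.mpr hn
  have hk1 : ((K + 1 : ℕ) : ℝ) = (K : ℝ) + 1 := by push_cast; ring
  have hs : (5 * (n : ℝ) ^ 2 + 6 * n * (K + 1 : ℕ) + 2 * ((K + 1 : ℕ) : ℝ) ^ 2
      + 10 * n + 6 * (K + 1 : ℕ) + 5) / 4 ≤ (17 / 2) * ((K : ℝ) + 2) ^ 2 := by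
    rw [hk1]
    have hn0 : (0:ℝ) ≤ (n : ℝ) := Nat.cast_nonneg n
    have hK0 : (0:ℝ) ≤ (K : ℝ) := Nat.cast_nonneg K
    nlinarith
  have hB := B_le n K
  have hB0 := (B_pos n (K + 1)).le
  calc (5 * (n : ℝ) ^ 2 + 6 * n * (K + 1 : ℕ) + 2 * ((K + 1 : ℕ) : ℝ) ^ 2
      + 10 * n + 6 * (K + 1 : ℕ) + 5) / 4 * B n (K + 1)
      ≤ ((17 / 2) * ((K : ℝ) + 2) ^ 2) * (1 / ((K : ℝ) + 2) ^ 4) := by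
        apply mul_le_mul hs hB hB0 (by positivity)
    _ = (17 / 2) / ((K : ℝ) + 2) ^ 2 := by
        field_simp

lemma E_bound (K : ℕ) : |E K| ≤ 9 / ((K : ℝ) + 1) := by
  have h1 : |E K| ≤ ∑ n ∈ Finset.range (K + 1), |G n (K + 1)| :=
    Finset.abs_sum_le_sum_abs _ _
  have h2 : ∑ n ∈ Finset.range (K + 1), |G n (K + 1)|
      ≤ (K + 1) * ((17 / 2) / ((K : ℝ) + 2) ^ 2) := by
    have := Finset.sum_le_card_nsmul (Finset.range (K + 1)) (fun n => |G n (K + 1)|)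
      ((17 / 2) / ((K : ℝ) + 2) ^ 2)
      (fun n hn => G_bound n K (by simpa using Finset.mem_range_succ_iff.mp hn))
    simpa [Finset.card_range, nsmul_eq_mul] using this
  have h3 : ((K : ℝ) + 1) * ((17 / 2) / ((K : ℝ) + 2) ^ 2) ≤ 9 / ((K : ℝ) + 1) := by
    have hrw : ((K : ℝ) + 1) * ((17 / 2) / ((K : ℝ) + 2) ^ 2)
        = (17 / 2 * ((K : ℝ) + 1)) / ((K : ℝ) + 2) ^ 2 := by ring
    rw [hrw, div_le_div_iff₀ (by positivity) (by positivity)]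
    have hK0 : (0:ℝ) ≤ (K : ℝ) := Nat.cast_nonneg K
    nlinarith
  linarith [h1, h2, h3]


lemma E_tendsto : Tendsto E atTop (𝓝 0) := by
  apply squeeze_zero_norm (fun K => E_bound K)
  have h : Tendsto (fun n : ℕ => 9 / ((n : ℝ) + 1)) atTop (𝓝 0) := by
    apply Tendsto.div_atTop tendsto_const_nhds
    exact tendsto_atTop_add_const_right atTop 1 tendsto_natCast_atTop_atTop
  exact h

lemma summable_z : Summable z := by
  have h : Summable (fun k : ℕ => 1 / (k : ℝ) ^ 3) :=
    Real.summable_one_div_nat_pow.mpr (by norm_num)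
  have h2 := (summable_nat_add_iff 1).mpr h
  apply h2.congr
  intro n
  unfold z
  push_cast
  ring

lemma t_abs (n : ℕ) :
    |t n| = (205 * (n : ℝ) ^ 2 + 250 * (n : ℝ) + 77) *
      ((n.factorial : ℝ)) ^ 10 / (64 * ((2 * n + 1).factorial : ℝ) ^ 5) := by
  unfold t
  rw [abs_div, abs_mul, abs_mul, abs_pow, abs_neg, abs_one, one_pow, one_mul]
  have h1 : (0:ℝ) ≤ 205 * (n : ℝ) ^ 2 + 250 * (n : ℝ) + 77 := by positivity
  have h2 : (0:ℝ) ≤ ((n.factorial : ℝ)) ^ 10 := by positivity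
  have h3 : (0:ℝ) ≤ 64 * ((2 * n + 1).factorial : ℝ) ^ 5 := by positivity
  rw [abs_of_nonneg h1, abs_of_nonneg h2, abs_of_nonneg h3]

lemma t_bound (n : ℕ) : |t n| ≤ 9 * z n := by
  rw [t_abs]
  unfold z
  have hnat : ((n + 1) * (n.factorial * n.factorial)) ^ 5 ≤ ((2 * n + 1).factorial) ^ 5 :=
    Nat.pow_le_pow_left (nat_ineq1' n) 5
  have hcast : (((n : ℝ) + 1) * ((n.factorial : ℝ) * (n.factorial : ℝ))) ^ 5
      ≤ (((2 * n + 1).factorial : ℝ)) ^ 5 := by exact_mod_cast hnat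
  rw [div_le_iff₀ (by positivity), mul_comm (9 : ℝ)]
  rw [mul_assoc]
  have hn0 : (0:ℝ) ≤ (n : ℝ) := Nat.cast_nonneg n
  have hf0 : (0:ℝ) < (n.factorial : ℝ) := fact_cast_pos n
  have h205 : 205 * (n : ℝ) ^ 2 + 250 * (n : ℝ) + 77 ≤ 576 * ((n : ℝ) + 1) ^ 2 := by nlinarith
  calc (205 * (n : ℝ) ^ 2 + 250 * (n : ℝ) + 77) * ((n.factorial : ℝ)) ^ 10
      ≤ (576 * ((n : ℝ) + 1) ^ 2) * ((n.factorial : ℝ)) ^ 10 := by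
        apply mul_le_mul_of_nonneg_right h205 (by positivity)
    _ ≤ (1 / ((n : ℝ) + 1) ^ 3 * (9 * (64 * ((2 * n + 1).factorial : ℝ) ^ 5))) := by
        rw [div_mul_eq_mul_div, le_div_iff₀ (by positivity)]
        have hexp : (((n : ℝ) + 1) * ((n.factorial : ℝ) * (n.factorial : ℝ))) ^ 5
            = ((n : ℝ) + 1) ^ 5 * ((n.factorial : ℝ)) ^ 10 := by ring
        rw [hexp] at hcast
        nlinarith [hcast, pow_pos (fact_cast_pos (2 * n + 1)) 5, pow_pos hf0 10,
          pow_nonneg (by positivity : (0:ℝ) ≤ (n:ℝ)+1) 5]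

lemma summable_t : Summable t := by
  apply Summable.of_norm_bounded (g := fun n => 9 * z n) (summable_z.mul_left 9)
  intro n
  simpa using t_bound n

lemma tsum_eq : ∑' n, t n = ∑' k, z k := by
  have h1 : Tendsto (fun K => ∑ k ∈ Finset.range (K + 1), z k) atTop (𝓝 (∑' k, z k)) :=
    summable_z.hasSum.tendsto_sum_nat.comp (tendsto_add_atTop_nat 1)
  have h2 : Tendsto (fun K => ∑ k ∈ Finset.range (K + 1), t k) atTop (𝓝 (∑' n, t n)) :=
    summable_t.hasSum.tendsto_sum_nat.comp (tendsto_add_atTop_nat 1)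
  have h3 : Tendsto (fun K => ∑ k ∈ Finset.range (K + 1), t k - E K) atTop
      (𝓝 (∑' n, t n - 0)) := h2.sub E_tendsto
  rw [sub_zero] at h3
  have h4 : (fun K => ∑ k ∈ Finset.range (K + 1), z k)
      = (fun K => ∑ k ∈ Finset.range (K + 1), t k - E K) := funext key
  rw [h4] at h1
  exact (tendsto_nhds_unique h1 h3).symm

end AZzeta3

theorem amdeberhan_zeilberger_zeta3 :
    ∑' n : ℕ, (-1 : ℝ) ^ n * (205 * (n : ℝ) ^ 2 + 250 * (n : ℝ) + 77) *
        ((n.factorial : ℝ)) ^ 10 / (64 * ((2 * n + 1).factorial : ℝ) ^ 5) =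
      ∑' k : ℕ, 1 / ((k : ℝ) + 1) ^ 3 :=
  AZzeta3.tsum_eq
end

section
/- For real numbers a, b and real z with |z| < 1 and |z/(z−1)| < 1 (and b not a nonpositive integer, b−a not a nonpositive integer), the Euler-type transformation ∑_{k=0}^∞ (a)_k/(b)_k · z^k = 1/(1−z) · ∑_{n=0}^∞ (b−a)_n/(b)_n · (z/(z−1))^n holds, where (x)_k denotes the rising factorial. -/
/-- The rising factorial (Pochhammer symbol) `(x)_n = x(x+1)⋯(x+n-1)` for real `x`. -/
def riseFac (x : ℝ) (n : ℕ) : ℝ := ∏ i ∈ Finset.range n, (x + (i : ℝ))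

lemma riseFac_zero (x : ℝ) : riseFac x 0 = 1 := by simp [riseFac]

lemma riseFac_succ (x : ℝ) (n : ℕ) : riseFac x (n+1) = riseFac x n * (x + n) := by
  simp [riseFac, Finset.prod_range_succ]

lemma riseFac_succ' (x : ℝ) (n : ℕ) : riseFac x (n+1) = x * riseFac (x+1) n := by
  rw [riseFac, Finset.prod_range_succ', riseFac, mul_comm]
  simp only [Nat.cast_zero, add_zero]
  congr 1
  exact Finset.prod_congr rfl fun i _ => by push_cast; ring

lemma riseFac_add (x : ℝ) (m n : ℕ) : riseFac x (m+n) = riseFac x m * riseFac (x+m) n := by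
  rw [riseFac, riseFac, riseFac, Finset.prod_range_add]
  congr 1
  exact Finset.prod_congr rfl fun i _ => by push_cast; ring

lemma riseFac_ne_zero {b : ℝ} (hb : ∀ m : ℕ, b ≠ -(m:ℝ)) (n : ℕ) : riseFac b n ≠ 0 :=
  Finset.prod_ne_zero_iff.mpr fun i _ h => hb i (by linarith)

lemma chu (x : ℝ) : ∀ (k : ℕ) (y : ℝ),
    ∑ n ∈ Finset.range (k+1), (-1:ℝ)^n * (k.choose n) * riseFac x n * riseFac (y+n) (k-n)
      = riseFac (y-x) k := by
  intro k
  induction k with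
  | zero => intro y; simp [riseFac]
  | succ k ih =>
    intro y
    have hA : ∑ n ∈ Finset.range (k+2),
        (-1:ℝ)^n * ((k+1).choose n) * riseFac x n * riseFac (y+n) (k+1-n)
        = ∑ n ∈ Finset.range (k+1),
            ((-1:ℝ)^n * (k.choose n) * riseFac x n * riseFac (y+n) (k+1-n)
             - (-1:ℝ)^n * (k.choose n) * riseFac x (n+1) * riseFac (y+n+1) (k-n)) := by
      rw [Finset.sum_range_succ' (fun n => (-1:ℝ)^n * ((k+1).choose n) * riseFac x n * riseFac (y+n) (k+1-n)) (k+1)]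
      rw [Finset.sum_sub_distrib]
      have h1 : ∀ i ∈ Finset.range (k+1),
          (-1:ℝ)^(i+1) * ((k+1).choose (i+1)) * riseFac x (i+1) * riseFac (y+(i+1:ℕ)) (k+1-(i+1))
          = (-1:ℝ)^(i+1) * (k.choose (i+1)) * riseFac x (i+1) * riseFac (y+(i+1:ℕ)) (k-i)
            - (-1:ℝ)^i * (k.choose i) * riseFac x (i+1) * riseFac (y+i+1) (k-i) := by
        intro i hi
        have : (k+1).choose (i+1) = k.choose i + k.choose (i+1) := Nat.choose_succ_succ k i
        rw [this]
        have h2 : k+1-(i+1) = k-i := by omega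
        rw [h2]
        have h3 : (y + ((i:ℝ)+1)) = y + i + 1 := by ring
        push_cast [h3]
        ring
      rw [Finset.sum_congr rfl h1, Finset.sum_sub_distrib]
      have h4 : ∑ i ∈ Finset.range (k+1),
          (-1:ℝ)^(i+1) * (k.choose (i+1)) * riseFac x (i+1) * riseFac (y+(i+1:ℕ)) (k-i)
          + (-1:ℝ)^0 * ((k+1).choose 0) * riseFac x 0 * riseFac (y+(0:ℕ)) (k+1-0)
          = ∑ n ∈ Finset.range (k+1),
            (-1:ℝ)^n * (k.choose n) * riseFac x n * riseFac (y+n) (k+1-n) := by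
        have h5 : ∑ n ∈ Finset.range (k+2),
            (-1:ℝ)^n * (k.choose n) * riseFac x n * riseFac (y+n) (k+1-n)
            = ∑ i ∈ Finset.range (k+1),
              (-1:ℝ)^(i+1) * (k.choose (i+1)) * riseFac x (i+1) * riseFac (y+(i+1:ℕ)) (k+1-(i+1))
              + (-1:ℝ)^0 * (k.choose 0) * riseFac x 0 * riseFac (y+(0:ℕ)) (k+1-0) :=
          Finset.sum_range_succ' _ (k+1)
        have h6 : ∑ n ∈ Finset.range (k+2),
            (-1:ℝ)^n * (k.choose n) * riseFac x n * riseFac (y+n) (k+1-n)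
            = ∑ n ∈ Finset.range (k+1),
              (-1:ℝ)^n * (k.choose n) * riseFac x n * riseFac (y+n) (k+1-n) := by
          rw [Finset.sum_range_succ]
          simp [Nat.choose_succ_self]
        rw [← h6, h5]
        congr 1
        · exact Finset.sum_congr rfl fun i _ => by rw [show k+1-(i+1) = k-i from by omega]
        · simp
      rw [sub_add_eq_add_sub, h4]
    rw [hA]
    have hB : ∀ n ∈ Finset.range (k+1),
        (-1:ℝ)^n * (k.choose n) * riseFac x n * riseFac (y+n) (k+1-n)
        - (-1:ℝ)^n * (k.choose n) * riseFac x (n+1) * riseFac (y+n+1) (k-n)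
        = (y-x) * ((-1:ℝ)^n * (k.choose n) * riseFac x n * riseFac ((y+1)+n) (k-n)) := by
      intro n hn
      rw [Finset.mem_range] at hn
      rw [show k+1-n = (k-n)+1 from by omega, riseFac_succ' (y+n) (k-n), riseFac_succ x n,
        show (y:ℝ)+n+1 = (y+1)+n from by ring]
      ring
    rw [Finset.sum_congr rfl hB, ← Finset.mul_sum, ih (y+1),
      show y+1-x = (y-x)+1 from by ring, ← riseFac_succ']

open Filter

lemma euler_core (a b z : ℝ) (hz : |z| < 1/2) (hb : ∀ m : ℕ, b ≠ -(m : ℝ)) :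
    ∑' k : ℕ, riseFac a k / riseFac b k * z ^ k =
      (1 / (1 - z)) * ∑' n : ℕ, riseFac (b - a) n / riseFac b n * (z / (z - 1)) ^ n := by
  have hz1 : |z| < 1 := hz.trans (by norm_num)
  have hzlt : z < 1 := (abs_lt.1 hz1).2
  have h1z : (1:ℝ) - z ≠ 0 := by linarith
  have h1za : (0:ℝ) < 1 - |z| := by linarith [abs_nonneg z]
  have h1za' : (1:ℝ) - |z| ≠ 0 := ne_of_gt h1za
  have hbn : ∀ n : ℕ, b + (n:ℝ) ≠ 0 := by
    intro n h; exact hb n (by linarith)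
  set c : ℕ → ℝ := fun n => riseFac (b - a) n / riseFac b n with hc
  set F : ℕ × ℕ → ℝ := fun p => (-1:ℝ)^p.1 * c p.1 * (((p.2 + p.1).choose p.1 : ℕ) : ℝ) * z^(p.1+p.2) with hF
  -- row sums
  have hrow : ∀ n : ℕ, HasSum (fun m => F (n, m)) (c n * (z/(z-1))^n * (1/(1-z))) := by
    intro n
    have h := (hasSum_choose_mul_geometric_of_norm_lt_one (𝕜 := ℝ) n
      (r := z) (by rwa [Real.norm_eq_abs])).mul_left ((-1:ℝ)^n * c n * z^n)
    have hval : (-1:ℝ)^n * c n * z^n * (1/(1-z)^(n+1)) = c n * (z/(z-1))^n * (1/(1-z)) := by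
      have hzz : (z-1)^n = (-1:ℝ)^n * (1-z)^n := by
        rw [show z-1 = -(1-z) from by ring]; exact neg_pow _ _
      rw [div_pow, hzz, pow_succ]
      simp only [one_div, div_eq_mul_inv, mul_inv, ← inv_pow, inv_neg, inv_one]
      ring
    rw [hval] at h
    convert h using 2 with m
    · rfl
    simp only [hF]
    rw [pow_add]
    ring
  have hrowN : ∀ n : ℕ, HasSum (fun m => |F (n, m)|) (|c n| * |z|^n * (1/(1-|z|)^(n+1))) := by
    intro n
    have h := (hasSum_choose_mul_geometric_of_norm_lt_one (𝕜 := ℝ) n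
      (r := |z|) (by rwa [Real.norm_eq_abs, abs_abs])).mul_left (|c n| * |z|^n)
    convert h using 2 with m
    · rfl
    simp only [hF]
    rw [abs_mul, abs_mul, abs_mul, abs_pow, abs_pow, abs_neg, abs_one, one_pow, one_mul,
      Nat.abs_cast, pow_add]
    ring
  -- summability of row sums (ratio test)
  have hsumrows : Summable fun n => |c n| * |z|^n * (1/(1-|z|)^(n+1)) := by
    set q : ℝ := |z| / (1 - |z|) with hq
    have hq0 : 0 ≤ q := div_nonneg (abs_nonneg z) h1za.le
    have hq1 : q < 1 := by
      rw [hq, div_lt_one h1za]; linarith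
    set r : ℝ := (1 + q) / 2 with hr
    have hqr : q < r := by rw [hr]; linarith
    have hr1 : r < 1 := by rw [hr]; linarith
    apply summable_of_ratio_norm_eventually_le hr1
    have htop : Tendsto (fun n : ℕ => b + (n:ℝ)) atTop atTop :=
      tendsto_atTop_add_const_left _ b tendsto_natCast_atTop_atTop
    have hquot : Tendsto (fun n : ℕ => (b - a + (n:ℝ)) / (b + n)) atTop (nhds 1) := by
      have he : ∀ n : ℕ, (b - a + (n:ℝ)) / (b + n) = 1 + (-a) / (b + n) := by
        intro n
        have h := hbn n
        field_simp
        ring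
      simp only [he]
      have h0 : Tendsto (fun n : ℕ => (-a) / (b + (n:ℝ))) atTop (nhds 0) :=
        Tendsto.const_div_atTop htop (-a)
      simpa using tendsto_const_nhds.add h0
    have hquot2 : Tendsto (fun n : ℕ => |b - a + (n:ℝ)| / |b + n| * q) atTop (nhds q) := by
      have h1 := (hquot.abs).mul_const q
      simp only [abs_div, abs_one, one_mul] at h1
      exact h1
    filter_upwards [hquot2.eventually_lt_const hqr] with n hn
    have hterm : |c (n+1)| * |z|^(n+1) * (1/(1-|z|)^(n+1+1))
        = (|b - a + (n:ℝ)| / |b + n| * q) * (|c n| * |z|^n * (1/(1-|z|)^(n+1))) := by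
      have hcn : c (n+1) = c n * ((b - a + n) / (b + n)) := by
        simp only [hc]
        rw [riseFac_succ, riseFac_succ, mul_div_mul_comm]
      rw [hcn, hq]
      simp only [abs_mul, abs_div, one_div, mul_inv, pow_succ]
      ring
    rw [Real.norm_eq_abs, Real.norm_eq_abs, abs_of_nonneg
        (by positivity : (0:ℝ) ≤ |c n| * |z|^n * (1/(1-|z|)^(n+1))),
      abs_of_nonneg (by positivity : (0:ℝ) ≤ |c (n+1)| * |z|^(n+1) * (1/(1-|z|)^(n+1+1))), hterm]
    have hpos : (0:ℝ) ≤ |c n| * |z|^n * (1/(1-|z|)^(n+1)) := by positivity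
    exact mul_le_mul_of_nonneg_right hn.le hpos
  -- full summability
  have hFnorm : Summable fun p : ℕ × ℕ => |F p| := by
    apply (summable_prod_of_nonneg (fun p => abs_nonneg _)).2
    refine ⟨fun n => (hrowN n).summable, ?_⟩
    apply Summable.congr hsumrows
    intro n
    exact (hrowN n).tsum_eq.symm
  have hFs : Summable F := by
    apply Summable.of_norm
    simpa only [Real.norm_eq_abs] using hFnorm
  -- diagonal regrouping
  have key : ∀ k : ℕ, ∑ p ∈ Finset.HasAntidiagonal.antidiagonal k, F p = riseFac a k / riseFac b k * z ^ k := by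
    intro k
    rw [Finset.Nat.sum_antidiagonal_eq_sum_range_succ_mk]
    have hterm : ∀ n ∈ Finset.range (k+1),
        F (n, k - n) = (-1:ℝ)^n * (k.choose n) * c n * z^k := by
      intro n hn
      rw [Finset.mem_range] at hn
      simp only [hF]
      rw [show k - n + n = k from by omega, show n + (k - n) = k from by omega]
      ring
    rw [Finset.sum_congr rfl hterm]
    have hbk : riseFac b k ≠ 0 := riseFac_ne_zero hb k
    have hcdecomp : ∀ n ∈ Finset.range (k+1),
        (-1:ℝ)^n * (k.choose n) * c n * z^k
        = (-1:ℝ)^n * (k.choose n) * riseFac (b-a) n * riseFac (b+(n:ℝ)) (k-n) / riseFac b k * z^k := by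
      intro n hn
      rw [Finset.mem_range] at hn
      have hsplit : riseFac b k = riseFac b n * riseFac (b+(n:ℝ)) (k-n) := by
        have h := riseFac_add b n (k-n)
        rwa [show n + (k-n) = k from by omega] at h
      have hbn' : riseFac b n ≠ 0 := riseFac_ne_zero hb n
      have hR : riseFac (b+(n:ℝ)) (k-n) ≠ 0 := by
        apply Finset.prod_ne_zero_iff.mpr
        intro i _ hzero
        exact hb (n+i) (by push_cast at hzero ⊢; linarith)
      simp only [hc]
      rw [hsplit]
      field_simp
    rw [Finset.sum_congr rfl hcdecomp, ← Finset.sum_mul, ← Finset.sum_div, chu (b-a) k b,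
      show b - (b-a) = a from by ring]
  -- assemble
  calc ∑' k : ℕ, riseFac a k / riseFac b k * z ^ k
      = ∑' k : ℕ, ∑ p ∈ Finset.HasAntidiagonal.antidiagonal k, F p := tsum_congr fun k => (key k).symm
    _ = ∑' k : ℕ, ∑' p : (Finset.HasAntidiagonal.antidiagonal k : Finset (ℕ×ℕ)), F p :=
        tsum_congr fun k => (Finset.tsum_subtype _ F).symm
    _ = ∑' p : ℕ × ℕ, F p := by
        rw [← (Finset.HasAntidiagonal.sigmaAntidiagonalEquivProd (A := ℕ)).tsum_eq F]
        exact (Summable.tsum_sigma' (fun k => Summable.of_finite)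
          ((Finset.HasAntidiagonal.sigmaAntidiagonalEquivProd (A := ℕ)).summable_iff.2 hFs)).symm
    _ = ∑' n : ℕ, ∑' m : ℕ, F (n, m) := Summable.tsum_prod' hFs fun n => (hrow n).summable
    _ = ∑' n : ℕ, c n * (z/(z-1))^n * (1/(1-z)) := tsum_congr fun n => (hrow n).tsum_eq
    _ = (1 / (1 - z)) * ∑' n : ℕ, c n * (z / (z - 1)) ^ n := by
        rw [tsum_mul_right, mul_comm]

theorem euler_transformation (a b z : ℝ) (hz : |z| < 1) (hz' : |z / (z - 1)| < 1)
    (hb : ∀ m : ℕ, b ≠ -(m : ℝ)) (hba : ∀ m : ℕ, b - a ≠ -(m : ℝ)) :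
    ∑' k : ℕ, riseFac a k / riseFac b k * z ^ k =
      (1 / (1 - z)) * ∑' n : ℕ, riseFac (b - a) n / riseFac b n * (z / (z - 1)) ^ n := by
  by_cases hhalf : |z| < 1/2
  · exact euler_core a b z hhalf hb
  · have hzlt : z < 1 := (abs_lt.1 hz).2
    have hzgt : -1 < z := (abs_lt.1 hz).1
    have hz1 : z - 1 ≠ 0 := by linarith
    have hzneg : z < 0 := by
      rcases le_or_gt 0 z with h | h
      · exfalso
        have h2 : (1:ℝ)/2 ≤ z := by
          have h4 := not_lt.mp hhalf
          rwa [abs_of_nonneg h] at h4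
        have h3 : |z/(z-1)| = z/(1-z) := by
          rw [abs_div, abs_of_nonneg h, abs_of_neg (by linarith : z-1 < 0), neg_sub]
        rw [h3, div_lt_one (by linarith : (0:ℝ) < 1-z)] at hz'
        linarith
      · exact h
    set w := z / (z - 1) with hw
    have hwhalf : |w| < 1/2 := by
      rw [hw, abs_div, abs_of_neg hzneg, abs_of_neg (by linarith : z-1 < 0), neg_sub,
        div_lt_iff₀ (by linarith : (0:ℝ) < 1-z)]
      linarith
    have hcore := euler_core (b-a) b w hwhalf hb
    rw [show b - (b-a) = a from by ring] at hcore
    have hwz : w / (w-1) = z := by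
      rw [hw]
      field_simp
      ring
    have h1wv : 1/(1-w) = 1 - z := by
      rw [hw, show (1:ℝ) - z/(z-1) = -1/(z-1) from by field_simp; ring, one_div_div]
      ring
    rw [hwz, h1wv] at hcore
    rw [hcore, ← mul_assoc, one_div, inv_mul_cancel₀ (by linarith : (1:ℝ)-z ≠ 0), one_mul]
end

section
/- For real z with |z| < 1 and z²/|z−1| < 4, one has −log(1−z)/z = ∑_{k=0}^∞ z^k/(k+1) = ((z−2)/(2(z−1))) · ∑_{n=0}^∞ (1/((2n+1)·C(2n,n))) · (z²/(z−1))^n, where C(2n,n) is the central binomial coefficient. -/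
open Nat MeasureTheory

open Nat

lemma prod_range_asc (m k : ℕ) : ∏ j ∈ Finset.range k, (m + j) = m.ascFactorial k := by
  induction k with
  | zero => simp
  | succ k ih => rw [Finset.prod_range_succ, ih, Nat.ascFactorial_succ, mul_comm]

lemma fact_prod (n : ℕ) : n ! * ∏ j ∈ Finset.range (n+1), (n + 1 + j) = (2*n+1)! := by
  rw [prod_range_asc, Nat.factorial_mul_ascFactorial]
  congr 1; omega

lemma beta_nat (n : ℕ) :
    ∫ t in (0:ℝ)..1, t ^ n * (1 - t) ^ n
      = 1 / ((2 * (n:ℝ) + 1) * ((2*n).choose n : ℝ)) := by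
  have h1 := Complex.betaIntegral_eval_nat_add_one_right
    (u := (n+1 : ℂ)) (by simp; positivity) n
  have h0 : Complex.betaIntegral (n+1) (n+1)
      = ((∫ t in (0:ℝ)..1, t ^ n * (1 - t) ^ n : ℝ) : ℂ) := by
    rw [Complex.betaIntegral, ← intervalIntegral.integral_ofReal]
    refine intervalIntegral.integral_congr fun x hx => ?_
    have h2 : ((n:ℂ)+1) - 1 = ((n : ℕ) : ℂ) := by ring
    rw [h2, Complex.cpow_natCast, Complex.cpow_natCast]
    norm_cast
  have hP : (n ! : ℂ) * ∏ j ∈ Finset.range (n+1), ((n:ℂ) + 1 + j) = ((2*n+1)! : ℂ) := by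
    rw [← fact_prod n]
    push_cast
    ring
  have hPne : (∏ j ∈ Finset.range (n+1), ((n:ℂ) + 1 + j)) ≠ 0 := by
    intro h
    rw [h, mul_zero] at hP
    exact (Nat.cast_ne_zero.mpr (Nat.factorial_ne_zero (2*n+1))) hP.symm
  have key : ((∫ t in (0:ℝ)..1, t ^ n * (1 - t) ^ n : ℝ) : ℂ) * ((2*n+1)! : ℂ)
      = (n ! : ℂ) * (n ! : ℂ) := by
    rw [← h0, h1, ← hP, div_mul_eq_mul_div, mul_comm ((n !:ℂ)) _, mul_assoc,
      mul_div_assoc, mul_div_cancel_left₀ _ hPne]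
  have keyR : (∫ t in (0:ℝ)..1, t ^ n * (1 - t) ^ n) * ((2*n+1)! : ℝ)
      = (n ! : ℝ) * (n ! : ℝ) := by
    exact_mod_cast key
  have hcN : (2*n).choose n * n ! * n ! = (2*n)! := by
    have h := Nat.choose_mul_factorial_mul_factorial (show n ≤ 2*n by omega)
    simpa [show 2*n - n = n by omega] using h
  have hcR : ((2*n).choose n : ℝ) * (n ! : ℝ) * (n ! : ℝ) = ((2*n)! : ℝ) := by
    exact_mod_cast congrArg (Nat.cast (R := ℝ)) hcN
  have hfs : ((2*n+1)! : ℝ) = (2*(n:ℝ)+1) * ((2*n)! : ℝ) := by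
    rw [Nat.factorial_succ]; push_cast [Nat.mul_comm]; ring
  have hne1 : ((2*n)! : ℝ) ≠ 0 := Nat.cast_ne_zero.mpr (Nat.factorial_ne_zero _)
  have hne2 : (2*(n:ℝ)+1) ≠ 0 := by positivity
  have hne3 : ((2*n).choose n : ℝ) ≠ 0 :=
    Nat.cast_ne_zero.mpr (Nat.choose_pos (show n ≤ 2*n by omega)).ne'
  have hne4 : (n ! : ℝ) ≠ 0 := Nat.cast_ne_zero.mpr (Nat.factorial_ne_zero _)
  rw [hfs] at keyR
  have hI : (∫ t in (0:ℝ)..1, t ^ n * (1 - t) ^ n)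
      = ((n ! : ℝ) * (n ! : ℝ)) / ((2*(n:ℝ)+1) * ((2*n)! : ℝ)) := by
    rw [eq_div_iff (mul_ne_zero hne2 hne1)]
    linear_combination keyR
  rw [hI, ← hcR]
  field_simp


lemma series_eq_integral {w : ℝ} (hw : |w| < 4)
    (hbeta : ∀ n : ℕ, ∫ t in (0:ℝ)..1, t ^ n * (1 - t) ^ n
      = 1 / ((2 * (n:ℝ) + 1) * ((2*n).choose n : ℝ))) :
    HasSum (fun n : ℕ => (1 / ((2*(n:ℝ)+1) * ((2*n).choose n : ℝ))) * w ^ n)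
      (∫ t in (0:ℝ)..1, (1 - w * (t * (1 - t)))⁻¹) := by
  have hr : ∀ t : ℝ, t ∈ Set.Ioc (0:ℝ) 1 → |w * (t * (1-t))| ≤ |w| / 4 := by
    intro t ht
    rw [abs_mul]
    have h1 : 0 ≤ t * (1-t) := mul_nonneg ht.1.le (by linarith [ht.2])
    rw [abs_of_nonneg h1]
    have h2 : t * (1-t) ≤ 1/4 := by nlinarith [sq_nonneg (t - 1/2)]
    calc |w| * (t*(1-t)) ≤ |w| * (1/4) := by
          exact mul_le_mul_of_nonneg_left h2 (abs_nonneg w)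
      _ = |w|/4 := by ring
  have hq : |w| / 4 < 1 := by linarith
  have hq0 : (0:ℝ) ≤ |w|/4 := by positivity
  have H : HasSum (fun n : ℕ => ∫ t in (0:ℝ)..1, (w * (t * (1-t))) ^ n)
      (∫ t in (0:ℝ)..1, (1 - w * (t * (1 - t)))⁻¹) := by
    apply intervalIntegral.hasSum_integral_of_dominated_convergence
      (bound := fun n _ => (|w|/4) ^ n)
    · intro n
      exact (Continuous.aestronglyMeasurable (by continuity))
    · intro n
      filter_upwards with t ht
      rw [Set.uIoc_of_le (by norm_num : (0:ℝ) ≤ 1)] at ht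
      calc ‖(w * (t * (1-t))) ^ n‖ = |w * (t * (1-t))| ^ n := by
            rw [Real.norm_eq_abs, abs_pow]
        _ ≤ (|w|/4) ^ n := pow_le_pow_left₀ (abs_nonneg _) (hr t ht) n
    · filter_upwards with t _
      exact summable_geometric_of_lt_one hq0 hq
    · exact intervalIntegrable_const
    · filter_upwards with t ht
      rw [Set.uIoc_of_le (by norm_num : (0:ℝ) ≤ 1)] at ht
      exact hasSum_geometric_of_abs_lt_one (lt_of_le_of_lt (hr t ht) hq)
  convert H using 2 with n
  rw [← hbeta n, mul_comm, ← intervalIntegral.integral_const_mul]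
  refine intervalIntegral.integral_congr fun t _ => ?_
  rw [mul_pow, mul_pow]

lemma integral_eval {z : ℝ} (hz : |z| < 1) (hz0 : z ≠ 0) :
    ∫ t in (0:ℝ)..1, (1 - (z^2/(z-1)) * (t * (1-t)))⁻¹
      = 2 * (z-1) * Real.log (1-z) / (z * (2-z)) := by
  have hz1 : z < 1 := lt_of_le_of_lt (le_abs_self z) hz
  have hzm : -1 < z := by have := neg_abs_le z; linarith
  have hz1' : z - 1 ≠ 0 := by linarith
  have h2z : (2:ℝ) - z ≠ 0 := by linarith
  have h1z : (1:ℝ) - z ≠ 0 := by linarith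
  have hpos : ∀ t : ℝ, t ∈ Set.uIcc (0:ℝ) 1 → 0 < 1 - z*t ∧ 0 < 1 - z*(1-t) := by
    intro t ht
    rw [Set.uIcc_of_le (by norm_num : (0:ℝ) ≤ 1), Set.mem_Icc] at ht
    constructor
    · nlinarith [ht.1, ht.2]
    · nlinarith [ht.1, ht.2]
  have hfact : ∀ t : ℝ, 1 - (z^2/(z-1)) * (t * (1-t))
      = (1 - z*t) * (1 - z*(1-t)) / (1 - z) := by
    intro t
    field_simp
    ring
  set c := (z-1)/(z*(2-z)) with hc
  have key : ∀ t ∈ Set.uIcc (0:ℝ) 1,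
      HasDerivAt (fun t => c * (Real.log (1 - z*t) - Real.log (1 - z*(1-t))))
        ((1 - (z^2/(z-1)) * (t * (1-t)))⁻¹) t := by
    intro t ht
    obtain ⟨hp1, hp2⟩ := hpos t ht
    have d1 : HasDerivAt (fun t : ℝ => 1 - z*t) (-(z*1)) t :=
      ((hasDerivAt_id t).const_mul z).const_sub 1
    have d2 : HasDerivAt (fun t : ℝ => 1 - z*(1-t)) (-(z*(-1))) t := by
      have : HasDerivAt (fun t : ℝ => (1:ℝ) - t) (-1) t := (hasDerivAt_id t).const_sub 1
      exact (this.const_mul z).const_sub 1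
    have l1 := d1.log hp1.ne'
    have l2 := d2.log hp2.ne'
    have := ((l1.sub l2).const_mul c)
    convert this using 1
    · rfl
    · rfl
    · rfl
    rw [hfact t]
    rw [hc]
    field_simp
    ring
  have hint : IntervalIntegrable (fun t => (1 - (z^2/(z-1)) * (t * (1-t)))⁻¹)
      MeasureTheory.volume 0 1 := by
    apply ContinuousOn.intervalIntegrable
    apply ContinuousOn.inv₀ (by fun_prop)
    intro t ht
    rw [hfact t]
    obtain ⟨hp1, hp2⟩ := hpos t ht
    exact ne_of_gt (div_pos (mul_pos hp1 hp2) (by linarith))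
  rw [intervalIntegral.integral_eq_sub_of_hasDerivAt key hint]
  simp only [mul_one, mul_zero, sub_zero, sub_self, Real.log_one]
  rw [hc]
  field_simp
  ring

theorem log_transformation (z : ℝ) (hz : |z| < 1) (hz' : z ^ 2 / |z - 1| < 4) :
    (z ≠ 0 → -Real.log (1 - z) / z = ∑' k : ℕ, z ^ k / ((k : ℝ) + 1)) ∧
    ∑' k : ℕ, z ^ k / ((k : ℝ) + 1) =
      ((z - 2) / (2 * (z - 1))) *
        ∑' n : ℕ, (1 / ((2 * (n : ℝ) + 1) * (Nat.choose (2 * n) n : ℝ))) *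
          (z ^ 2 / (z - 1)) ^ n := by
  have hz1 : z < 1 := lt_of_le_of_lt (le_abs_self z) hz
  have hzm : -1 < z := by have := neg_abs_le z; linarith
  have hz1' : z - 1 ≠ 0 := by linarith
  have h2z : (2:ℝ) - z ≠ 0 := by linarith
  have part1 : ∀ hz0 : z ≠ 0,
      -Real.log (1 - z) / z = ∑' k : ℕ, z ^ k / ((k : ℝ) + 1) := by
    intro hz0
    have h := (Real.hasSum_pow_div_log_of_abs_lt_one hz).div_const z
    have h' : HasSum (fun k : ℕ => z ^ k / ((k : ℝ) + 1)) (-Real.log (1 - z) / z) := by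
      convert h using 2 with k
      · rfl
      field_simp
      ring
    exact h'.tsum_eq.symm
  refine ⟨part1, ?_⟩
  by_cases hz0 : z = 0
  · subst hz0
    have l1 : ∑' k : ℕ, (0:ℝ) ^ k / ((k : ℝ) + 1) = 1 := by
      rw [tsum_eq_single 0 (by intro n hn; simp [zero_pow hn])]
      norm_num
    have l2 : ∑' n : ℕ, (1 / ((2 * (n : ℝ) + 1) * (Nat.choose (2 * n) n : ℝ))) *
          ((0:ℝ) ^ 2 / ((0:ℝ) - 1)) ^ n = 1 := by
      rw [tsum_eq_single 0 (by intro n hn; simp [zero_pow hn])]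
      norm_num
    rw [l1, l2]
    norm_num
  · have habs : |z ^ 2 / (z - 1)| < 4 := by
      rwa [abs_div, abs_of_nonneg (sq_nonneg z)]
    have hs := series_eq_integral habs beta_nat
    have := hs.tsum_eq
    rw [integral_eval hz hz0] at this
    rw [this, ← part1 hz0]
    field_simp
    ring
end
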